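/- If σ₁ and σ₂ are finite firing sequences of a net N with σ₁ adjacent to σ₂ (i.e., σ₁ = αtuβ, σ₂ = αutβ, and the step {t,u} is enabled after firing α), and σ₂ is a prefix of a (possibly infinite) firing sequence σ₃, then there exists a firing sequence σ' of N with σ₁ ≤ σ' and σ' adjacent to σ₃; moreover, if σ₃ is finite then so is σ'. -/

import Mathlib

open Relation

/-- A place/transition net with place type `S` and transition type `T`. -/
structure Net (S T : Type) where
  /-- arc weight from place `s` to transition `t` -/
  pre : T → S → ℕ
  /-- arc weight from transition `t` to place `s` -/
  post : T → S → ℕ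
  /-- the initial marking -/
  M0 : S → ℕ
  pre_finite : ∀ t, {s | pre t s > 0}.Finite
  pre_nonempty : ∀ t, ∃ s, pre t s > 0
  post_finite : ∀ t, {s | post t s > 0}.Finite

namespace Net

variable {S T : Type} (N : Net S T)

/-- the singleton step `{t}` is enabled at marking `M` -/
def Enabled (t : T) (M : S → ℕ) : Prop := ∀ s, N.pre t s ≤ M s

/-- the two-element multiset step `{t,u}` is enabled at marking `M` -/
def Enabled2 (t u : T) (M : S → ℕ) : Prop := ∀ s, N.pre t s + N.pre u s ≤ M s

/-- firing transition `t` leads from marking `M` to marking `M'` -/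
def Fires (t : T) (M M' : S → ℕ) : Prop :=
  N.Enabled t M ∧ M' = fun s => M s - N.pre t s + N.post t s

/-- firing the finite transition sequence `σ` leads from `M` to `M'` -/
inductive FiresList : (S → ℕ) → List T → (S → ℕ) → Prop
  | nil (M : S → ℕ) : FiresList M [] M
  | cons {M M₁ M' : S → ℕ} {t : T} {σ : List T} :
      N.Fires t M M₁ → FiresList M₁ σ M' → FiresList M (t :: σ) M'

/-- a marking is reachable -/
def Reachable (M : S → ℕ) : Prop := ∃ σ : List T, N.FiresList N.M0 σ M

/-- `σ` is a finite firing sequence of `N` -/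
def FS (σ : List T) : Prop := ∃ M, N.FiresList N.M0 σ M

/-- `σ` is a (possibly infinite) firing sequence of `N` -/
def FSInf (σ : Stream'.Seq T) : Prop := ∀ n, N.FS (σ.take n)

/-- adjacency `≡₀` on finite firing sequences -/
def Adj (σ ρ : List T) : Prop :=
  ∃ (α β : List T) (t u : T) (M : S → ℕ),
    σ = α ++ t :: u :: β ∧ ρ = α ++ u :: t :: β ∧
    N.FiresList N.M0 α M ∧ N.Enabled2 t u M ∧ N.FS σ ∧ N.FS ρ

/-- adjacency `≡₀` on possibly infinite firing sequences -/
def AdjSeq (σ ρ : Stream'.Seq T) : Prop :=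
  ∃ (α : List T) (β : Stream'.Seq T) (t u : T) (M : S → ℕ),
    σ = (Stream'.Seq.ofList (α ++ [t, u])).append β ∧
    ρ = (Stream'.Seq.ofList (α ++ [u, t])).append β ∧
    N.FiresList N.M0 α M ∧ N.Enabled2 t u M ∧ N.FSInf σ ∧ N.FSInf ρ

end Net

/-- the finite sequence `l` is a prefix of the possibly infinite sequence `s` -/
def ListPrefixSeq {T : Type} (l : List T) (s : Stream'.Seq T) : Prop :=
  s.take l.length = l

namespace Net

variable {S T : Type} (N : Net S T)

/-- the preorder `⊑₀^∞` on possibly infinite firing sequences -/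
def Sqsubseteq0 (σ ρ : Stream'.Seq T) : Prop :=
  ∀ σ'' : List T, N.FS σ'' → ListPrefixSeq σ'' σ →
    ∃ σ' ρ' : List T, N.FS σ' ∧ N.FS ρ' ∧ σ'' <+: σ' ∧
      ReflTransGen N.Adj σ' ρ' ∧ ListPrefixSeq ρ' ρ

end Net

section SeqAux

open Stream'.Seq

variable {α : Type}

lemma seq_take_nil (n : ℕ) : (Stream'.Seq.nil : Stream'.Seq α).take n = [] := by
  cases n <;> simp [Stream'.Seq.take]

lemma seq_take_cons (a : α) (s : Stream'.Seq α) (n : ℕ) :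
    (Stream'.Seq.cons a s).take (n + 1) = a :: s.take n := by
  simp [Stream'.Seq.take, Stream'.Seq.destruct_cons]

lemma seq_drop_nil (n : ℕ) : (Stream'.Seq.nil : Stream'.Seq α).drop n = Stream'.Seq.nil := by
  induction n with
  | zero => rfl
  | succ n ih => simp [Stream'.Seq.drop, ih, Stream'.Seq.tail_nil]

lemma seq_take_ofList_append (l : List α) (s : Stream'.Seq α) (n : ℕ) :
    ((Stream'.Seq.ofList l).append s).take n = l.take n ++ s.take (n - l.length) := by
  induction l generalizing n with
  | nil => simp [Stream'.Seq.ofList_nil, Stream'.Seq.nil_append]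
  | cons a l ih =>
    cases n with
    | zero => simp [Stream'.Seq.take]
    | succ n =>
      simp [Stream'.Seq.ofList_cons, Stream'.Seq.cons_append, seq_take_cons, ih,
        Nat.succ_sub_succ]

lemma seq_get_ofList_append (l : List α) (s : Stream'.Seq α) (n : ℕ) :
    ((Stream'.Seq.ofList l).append s).get? (l.length + n) = s.get? n := by
  induction l with
  | nil => simp [Stream'.Seq.ofList_nil, Stream'.Seq.nil_append]
  | cons a l ih =>
    simpa [Stream'.Seq.ofList_cons, Stream'.Seq.cons_append, Nat.succ_add] using ih

lemma seq_get_drop (s : Stream'.Seq α) (m n : ℕ) :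
    (s.drop m).get? n = s.get? (m + n) := by
  rw [← Stream'.Seq.head_dropn, ← Stream'.Seq.head_dropn, ← Stream'.Seq.dropn_add]

lemma seq_eq_take_append_drop (s : Stream'.Seq α) (n : ℕ) :
    s = (Stream'.Seq.ofList (s.take n)).append (s.drop n) := by
  induction n generalizing s with
  | zero => simp [Stream'.Seq.take, Stream'.Seq.ofList_nil, Stream'.Seq.nil_append]
  | succ n ih =>
    refine Stream'.Seq.recOn (motive := fun s => s =
        (Stream'.Seq.ofList (s.take (n+1))).append (s.drop (n+1))) s ?_ ?_
    · simp [seq_take_nil, Stream'.Seq.ofList_nil, Stream'.Seq.nil_append, seq_drop_nil]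
    · intro a s'
      have hd : (Stream'.Seq.cons a s').drop (n+1) = s'.drop n := by
        rw [← Stream'.Seq.dropn_tail, Stream'.Seq.tail_cons]
      rw [seq_take_cons, hd, Stream'.Seq.ofList_cons, Stream'.Seq.cons_append]
      exact congrArg (Stream'.Seq.cons a) (ih s')

end SeqAux

namespace Net

variable {S T : Type} (N : Net S T)

lemma firesList_append {M M' : S → ℕ} {l1 l2 : List T} :
    N.FiresList M (l1 ++ l2) M' ↔ ∃ M1, N.FiresList M l1 M1 ∧ N.FiresList M1 l2 M' := by
  induction l1 generalizing M with
  | nil =>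
    simp only [List.nil_append]
    constructor
    · exact fun h => ⟨M, .nil M, h⟩
    · rintro ⟨M1, h1, h2⟩; cases h1; exact h2
  | cons t l1 ih =>
    constructor
    · rintro (_ | ⟨hf, hrest⟩)
      rcases ih.1 hrest with ⟨M1, ha, hb⟩
      exact ⟨M1, .cons hf ha, hb⟩
    · rintro ⟨M1, (_ | ⟨hf, hrest⟩), h2⟩
      exact .cons hf (ih.2 ⟨M1, hrest, h2⟩)

lemma firesList_det {M M1 M2 : S → ℕ} {l : List T}
    (h1 : N.FiresList M l M1) (h2 : N.FiresList M l M2) : M1 = M2 := by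
  induction l generalizing M with
  | nil => cases h1; cases h2; rfl
  | cons t l ih =>
    rcases h1 with _ | ⟨⟨_, rfl⟩, h1'⟩
    rcases h2 with _ | ⟨⟨_, rfl⟩, h2'⟩
    exact ih h1' h2'

lemma fs_of_prefix {σ δ : List T} (h : N.FS σ) (hp : δ <+: σ) : N.FS δ := by
  rcases hp with ⟨γ, rfl⟩
  rcases h with ⟨M, h⟩
  rcases (N.firesList_append).1 h with ⟨M1, h1, _⟩
  exact ⟨M1, h1⟩

lemma swap_fires {M M' : S → ℕ} {t u : T} {δ : List T}
    (he : N.Enabled2 t u M) (h : N.FiresList M (u :: t :: δ) M') :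
    N.FiresList M (t :: u :: δ) M' := by
  rcases h with _ | ⟨⟨heu, rfl⟩, (_ | ⟨⟨het, rfl⟩, hrest⟩)⟩
  refine .cons (M₁ := fun s => M s - N.pre t s + N.post t s)
    ⟨fun s => by have := he s; omega, rfl⟩ ?_
  refine .cons (M₁ := fun s => (M s - N.pre t s + N.post t s) - N.pre u s + N.post u s)
    ⟨fun s => by
      have := he s
      show N.pre u s ≤ M s - N.pre t s + N.post t s
      omega, rfl⟩ ?_
  convert hrest using 1
  funext s
  have := he s
  simp only []
  omega

lemma fs_swap {α δ : List T} {t u : T} {M : S → ℕ}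
    (hα : N.FiresList N.M0 α M) (he : N.Enabled2 t u M)
    (h : N.FS (α ++ u :: t :: δ)) : N.FS (α ++ t :: u :: δ) := by
  rcases h with ⟨M', h⟩
  rcases (N.firesList_append).1 h with ⟨M1, h1, h2⟩
  have hM : M1 = M := N.firesList_det h1 hα
  subst hM
  exact ⟨M', (N.firesList_append).2 ⟨M1, hα, N.swap_fires he h2⟩⟩

end Net

theorem swap_prefix_fs_one_step {S T : Type} (N : Net S T)
    (σ₁ σ₂ : List T) (σ₃ : Stream'.Seq T)
    (h12 : N.Adj σ₁ σ₂) (h3 : N.FSInf σ₃) (h23 : ListPrefixSeq σ₂ σ₃) :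
    ∃ σ' : Stream'.Seq T, N.FSInf σ' ∧ ListPrefixSeq σ₁ σ' ∧ N.AdjSeq σ' σ₃ ∧
      (σ₃.Terminates → σ'.Terminates) := by
  obtain ⟨α, β, t, u, M, h1eq, h2eq, hα, he, hfs1, hfs2⟩ := h12
  set k := σ₂.length with hk
  have hlen : σ₁.length = k := by rw [hk, h1eq, h2eq]; simp
  set rest := σ₃.drop k with hrestdef
  have h3eq : σ₃ = (Stream'.Seq.ofList σ₂).append rest := by
    have h := seq_eq_take_append_drop σ₃ k
    rwa [show σ₃.take k = σ₂ from h23] at h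
  set σ' : Stream'.Seq T := (Stream'.Seq.ofList σ₁).append rest with hσ'def
  have key : ∀ m : ℕ, N.FS (σ₁ ++ rest.take m) := by
    intro m
    have h₃ : N.FS (σ₃.take (k + m)) := h3 _
    rw [h3eq, seq_take_ofList_append, List.take_of_length_le (by omega),
      show k + m - σ₂.length = m by omega] at h₃
    rw [h2eq] at h₃
    rw [h1eq]
    have e2 : (α ++ u :: t :: β) ++ rest.take m = α ++ u :: t :: (β ++ rest.take m) := by
      simp
    have e1 : (α ++ t :: u :: β) ++ rest.take m = α ++ t :: u :: (β ++ rest.take m) := by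
      simp
    rw [e2] at h₃
    rw [e1]
    exact N.fs_swap hα he h₃
  have hFSInf : N.FSInf σ' := by
    intro n
    have hp : σ'.take n <+: σ₁ ++ rest.take (n - σ₁.length) := by
      rw [hσ'def, seq_take_ofList_append]
      rcases le_or_gt σ₁.length n with h | h
      · rw [List.take_of_length_le h]
      · rw [show n - σ₁.length = 0 by omega,
          show Stream'.Seq.take 0 rest = [] from rfl, List.append_nil, List.append_nil]
        exact List.take_prefix n σ₁
    exact N.fs_of_prefix (key _) hp
  refine ⟨σ', hFSInf, ?_, ?_, ?_⟩
  · show σ'.take σ₁.length = σ₁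
    rw [hσ'def, seq_take_ofList_append, Nat.sub_self]
    simp [Stream'.Seq.take]
  · refine ⟨α, (Stream'.Seq.ofList β).append rest, t, u, M, ?_, ?_, hα, he, hFSInf, h3⟩
    · rw [hσ'def, show σ₁ = (α ++ [t, u]) ++ β by simp [h1eq],
        Stream'.Seq.ofList_append, Stream'.Seq.append_assoc]
    · rw [h3eq, show σ₂ = (α ++ [u, t]) ++ β by simp [h2eq],
        Stream'.Seq.ofList_append, Stream'.Seq.append_assoc]
  · rintro ⟨n, hn⟩
    refine ⟨σ₁.length + n, ?_⟩
    show σ'.get? (σ₁.length + n) = none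
    rw [hσ'def, seq_get_ofList_append, hrestdef, seq_get_drop]
    exact Stream'.Seq.le_stable σ₃ (by omega) (Stream'.Seq.le_stable σ₃ (Nat.le_refl n) hn)
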